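/- Let K be a field and let P, Q be polynomials over K with natDegree P ≥ 1 and natDegree Q ≥ 1. Then P and Q are coprime (IsCoprime P Q) if and only if there exists a unique pair of polynomials (L₁, L₂) over K satisfying L₁·P + L₂·Q = 1, natDegree L₁ < natDegree Q, and natDegree L₂ < natDegree P. -/

import Mathlib

open Polynomial

/-- The 'identity of Bézout' for polynomials over a field: `P` and `Q` (of degree
at least one) are coprime if and only if there is a unique pair `(L₁, L₂)` with
`L₁·P + L₂·Q = 1`, `natDegree L₁ < natDegree Q` and `natDegree L₂ < natDegree P`. -/
theorem isCoprime_iff_existsUnique_bezout_identity {K : Type*} [Field K]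
    (P Q : Polynomial K) (hP : 1 ≤ P.natDegree) (hQ : 1 ≤ Q.natDegree) :
    IsCoprime P Q ↔
      ∃! L : Polynomial K × Polynomial K,
        L.1 * P + L.2 * Q = 1 ∧
        L.1.natDegree < Q.natDegree ∧ L.2.natDegree < P.natDegree := by
  have hP0 : P ≠ 0 := fun h => by simp [h] at hP
  have hQ0 : Q ≠ 0 := fun h => by simp [h] at hQ
  constructor
  · intro hcop
    -- uniqueness part, proved generally
    have uniq : ∀ c d : Polynomial K × Polynomial K,
        (c.1 * P + c.2 * Q = 1 ∧ c.1.natDegree < Q.natDegree ∧ c.2.natDegree < P.natDegree) →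
        (d.1 * P + d.2 * Q = 1 ∧ d.1.natDegree < Q.natDegree ∧ d.2.natDegree < P.natDegree) →
        c = d := by
      rintro ⟨a₁, a₂⟩ ⟨b₁, b₂⟩ ⟨he₁, hd₁, hd₂⟩ ⟨he₂, hd₃, hd₄⟩
      simp only at *
      have key : (a₁ - b₁) * P = (b₂ - a₂) * Q := by linear_combination he₁ - he₂
      have hdvd : Q ∣ (a₁ - b₁) * P := ⟨b₂ - a₂, by linear_combination key⟩
      have hdvd' : Q ∣ a₁ - b₁ := (hcop.symm).dvd_of_dvd_mul_right hdvd
      have h1 : a₁ = b₁ := by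
        by_contra hne
        have hne0 : a₁ - b₁ ≠ 0 := sub_ne_zero.mpr hne
        have := Polynomial.natDegree_le_of_dvd hdvd' hne0
        have hle : (a₁ - b₁).natDegree ≤ max a₁.natDegree b₁.natDegree :=
          Polynomial.natDegree_sub_le _ _
        omega
      have h2 : a₂ = b₂ := by
        have hz : (b₂ - a₂) * Q = 0 := by rw [← key, h1]; ring
        have := sub_eq_zero.mp (mul_right_cancel₀ hQ0
          (by linear_combination hz : (b₂ - a₂) * Q = 0 * Q))
        exact this.symm
      exact Prod.ext h1 h2
    obtain ⟨a, b, hab⟩ := hcop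
    set lc := Q.leadingCoeff with hlc
    have hlc0 : lc ≠ 0 := leadingCoeff_ne_zero.mpr hQ0
    set M : Polynomial K := Q * C lc⁻¹ with hM
    have hMmonic : M.Monic := monic_mul_leadingCoeff_inv hQ0
    set L₁ : Polynomial K := a %ₘ M with hL₁
    set L₂ : Polynomial K := b + C lc⁻¹ * (a /ₘ M) * P with hL₂
    have hmod : L₁ + M * (a /ₘ M) = a := modByMonic_add_div a M
    have heq : L₁ * P + L₂ * Q = 1 := by
      rw [hL₂]; rw [hM] at hmod
      linear_combination P * hmod + hab
    have hdegM : M.degree = Q.degree := degree_mul_leadingCoeff_inv Q hQ0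
    have hd1 : L₁.natDegree < Q.natDegree := by
      rcases eq_or_ne L₁ 0 with h | h
      · rw [h]; simp; omega
      · have := degree_modByMonic_lt a hMmonic
        rw [hdegM, ← hL₁] at this
        exact natDegree_lt_natDegree h this
    have hd2 : L₂.natDegree < P.natDegree := by
      rcases eq_or_ne L₂ 0 with h | h
      · rw [h]; simp; omega
      · have hLQ : L₂ * Q = 1 - L₁ * P := by linear_combination heq
        have h1 : (L₂ * Q).natDegree = L₂.natDegree + Q.natDegree :=
          natDegree_mul h hQ0
        have h2 : (1 - L₁ * P).natDegree ≤ max (1 : Polynomial K).natDegree (L₁ * P).natDegree :=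
          natDegree_sub_le _ _
        have h3 : (L₁ * P).natDegree ≤ L₁.natDegree + P.natDegree := natDegree_mul_le
        have h4 : (1 : Polynomial K).natDegree = 0 := natDegree_one
        rw [hLQ, h1] at *
        omega
    exact ⟨⟨L₁, L₂⟩, ⟨heq, hd1, hd2⟩, fun y hy => uniq y ⟨L₁, L₂⟩ hy ⟨heq, hd1, hd2⟩⟩
  · rintro ⟨⟨L₁, L₂⟩, ⟨heq, -, -⟩, -⟩
    exact ⟨L₁, L₂, heq⟩
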